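/- Let S ∈ DOM[z] satisfy S = A_R(z+S) − R·S, where A_R(w) = ∑_{n≥1} R^n w^n and R > 1. Then S satisfies the quadratic equation (R+R²)S² + (R²z + Rz − 1)S + Rz = 0, and S has a strictly positive radius of convergence. -/

import Mathlib

def DomSeq (a : ℕ → ℝ) : Prop := a 0 = 0 ∧ ∀ n, 0 ≤ a n

/-- The `n`-th coefficient of `A_R(z + S) = ∑_{m ≥ 1} R^m (z + S(z))^m`. -/
noncomputable def ARcoeff (R : ℝ) (S : ℕ → ℝ) (n : ℕ) : ℝ :=
  ∑ m ∈ Finset.Icc 1 n,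
    R ^ m * PowerSeries.coeff n ((PowerSeries.X + PowerSeries.mk S) ^ m)


open PowerSeries Finset

lemma stmt10_coeff_pow_zero (f : PowerSeries ℝ) (hf : constantCoeff f = 0)
    {k m : ℕ} (h : k < m) : coeff k (f ^ m) = 0 := by
  have hx : (X : PowerSeries ℝ) ^ m ∣ f ^ m :=
    pow_dvd_pow_of_dvd (PowerSeries.X_dvd_iff.2 hf) m
  exact PowerSeries.X_pow_dvd_iff.1 hx k h

lemma stmt10_coeff_mul_congr (f g h : PowerSeries ℝ) (n : ℕ)
    (hfg : ∀ k ≤ n, coeff k f = coeff k g) :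
    coeff n (f * h) = coeff n (g * h) := by
  rw [PowerSeries.coeff_mul, PowerSeries.coeff_mul]
  refine Finset.sum_congr rfl fun p hp => ?_
  rw [Finset.HasAntidiagonal.mem_antidiagonal] at hp
  rw [hfg p.1 (by omega)]

lemma stmt10_geom_key (R : ℝ) (S : ℕ → ℝ) (hS0 : S 0 = 0)
    (heqA : ∀ k, (1 + R) * S k = ARcoeff R S k) :
    (C (1 + R) * PowerSeries.mk S) * (1 - C R * (X + PowerSeries.mk S)) =
      C R * (X + PowerSeries.mk S) := by
  set T : PowerSeries ℝ := X + PowerSeries.mk S with hT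
  have hT0 : constantCoeff T = 0 := by simp [hT, hS0]
  set q : PowerSeries ℝ := C R * T with hq
  ext n
  have hqpow : ∀ k m : ℕ, coeff k (q ^ m) = R ^ m * coeff k (T ^ m) := by
    intro k m; rw [hq, mul_pow, ← map_pow, coeff_C_mul]
  have hqzero : ∀ k m : ℕ, k < m → coeff k (q ^ m) = 0 := by
    intro k m hkm; rw [hqpow, stmt10_coeff_pow_zero T hT0 hkm, mul_zero]
  set G : PowerSeries ℝ := ∑ m ∈ Icc 1 (n+1), q ^ m with hG
  have hAG : ∀ k ≤ n, coeff k (C (1 + R) * PowerSeries.mk S) = coeff k G := by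
    intro k hk
    rw [coeff_C_mul, coeff_mk, heqA, ARcoeff, hG, map_sum]
    have hz : ∀ m ∈ Icc 1 (n+1), m ∉ Icc 1 k → coeff k (q ^ m) = 0 := by
      intro m hm hm'
      simp only [Finset.mem_Icc] at hm hm'
      exact hqzero k m (by omega)
    rw [← Finset.sum_subset (Finset.Icc_subset_Icc_right (by omega : k ≤ n+1)) hz]
    exact Finset.sum_congr rfl fun m _ => (hqpow k m).symm
  have hGq : G * (1 - q) = q - q ^ (n + 2) := by
    have h1 : G = q * ∑ i ∈ range (n+1), q ^ i := by
      rw [hG]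
      induction (n+1) with
      | zero => simp
      | succ N ih =>
        rw [Finset.sum_Icc_succ_top (by omega), ih, Finset.sum_range_succ]
        ring
    have h2 := geom_sum_mul q (n+1)
    rw [h1, mul_assoc]
    have h3 : (∑ i ∈ range (n+1), q ^ i) * (1 - q) = 1 - q ^ (n+1) := by
      linear_combination -h2
    rw [h3]
    ring
  calc coeff n ((C (1 + R) * PowerSeries.mk S) * (1 - q))
      = coeff n (G * (1 - q)) := stmt10_coeff_mul_congr _ _ _ n hAG
    _ = coeff n (q - q ^ (n + 2)) := by rw [hGq]
    _ = coeff n q := by rw [map_sub, hqzero n (n+2) (by omega), sub_zero]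

lemma stmt10_quad (R : ℝ) (S : ℕ → ℝ) (hS0 : S 0 = 0)
    (heqA : ∀ k, (1 + R) * S k = ARcoeff R S k) :
    PowerSeries.C (R + R ^ 2) * PowerSeries.mk S ^ 2 +
        (PowerSeries.C (R ^ 2) * PowerSeries.X + PowerSeries.C R * PowerSeries.X - 1) *
          PowerSeries.mk S +
        PowerSeries.C R * PowerSeries.X = 0 := by
  have key := stmt10_geom_key R S hS0 heqA
  simp only [map_add, map_mul, map_pow, map_one] at key ⊢
  linear_combination -key

lemma stmt10_rec (R : ℝ) (S : ℕ → ℝ)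
    (quad : PowerSeries.C (R + R ^ 2) * PowerSeries.mk S ^ 2 +
        (PowerSeries.C (R ^ 2) * PowerSeries.X + PowerSeries.C R * PowerSeries.X - 1) *
          PowerSeries.mk S +
        PowerSeries.C R * PowerSeries.X = 0) (n : ℕ) :
    S (n+1) = (R + R^2) * (∑ i ∈ range (n+2), S i * S (n+1-i)) +
      (R + R^2) * S n + (if n = 0 then R else 0) := by
  have quad' : PowerSeries.mk S = C (R + R^2) * (PowerSeries.mk S)^2 +
      C (R + R^2) * (X * PowerSeries.mk S) + C R * X := by
    simp only [map_add, map_pow] at quad ⊢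
    linear_combination -quad
  have hco := congrArg (coeff (n+1)) quad'
  rw [map_add, map_add, coeff_C_mul, coeff_C_mul, coeff_C_mul, coeff_mk,
    PowerSeries.coeff_succ_X_mul, coeff_mk, PowerSeries.coeff_X, sq (PowerSeries.mk S),
    PowerSeries.coeff_mul, Finset.Nat.sum_antidiagonal_eq_sum_range_succ_mk] at hco
  simp only [coeff_mk] at hco
  rw [hco]
  by_cases h : n = 0 <;> simp [h]

lemma stmt10_sum_inv_sq_le (n : ℕ) : ∑ k ∈ Icc 1 n, (1:ℝ)/(k:ℝ)^2 ≤ 2 := by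
  have key : ∀ m : ℕ, 1 ≤ m → ∑ k ∈ Icc 1 m, (1:ℝ)/(k:ℝ)^2 ≤ 2 - 1/(m:ℝ) := by
    intro m hm
    induction m, hm using Nat.le_induction with
    | base => norm_num
    | succ m hm ih =>
      rw [Finset.sum_Icc_succ_top (by omega)]
      have hm' : (1:ℝ) ≤ (m:ℝ) := by exact_mod_cast hm
      have e1 : (1:ℝ)/((m:ℝ)+1)^2 ≤ 1/((m:ℝ)*((m:ℝ)+1)) := by
        apply one_div_le_one_div_of_le (by positivity)
        nlinarith
      have e2 : (1:ℝ)/((m:ℝ)*((m:ℝ)+1)) = 1/(m:ℝ) - 1/((m:ℝ)+1) := by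
        field_simp
        ring
      push_cast
      linarith
  rcases Nat.eq_zero_or_pos n with h | h
  · simp [h]
  · have := key n h
    have : (0:ℝ) < (n:ℝ) := by exact_mod_cast h
    have h1 : (0:ℝ) ≤ 1/(n:ℝ) := by positivity
    linarith

lemma stmt10_conv_sum_bound (n : ℕ) (hn : 2 ≤ n) :
    ∑ k ∈ Icc 1 (n-1), 1/((k:ℝ)^2 * ((n-k:ℕ):ℝ)^2) ≤ 16/(n:ℝ)^2 := by
  have hterm : ∀ k ∈ Icc 1 (n-1),
      1/((k:ℝ)^2 * ((n-k:ℕ):ℝ)^2) ≤ 4/(n:ℝ)^2 * (1/(k:ℝ)^2 + 1/((n-k:ℕ):ℝ)^2) := by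
    intro k hk
    rw [mem_Icc] at hk
    have h1 : (1:ℝ) ≤ (k:ℝ) := by exact_mod_cast hk.1
    have h2 : (1:ℝ) ≤ ((n-k:ℕ):ℝ) := by
      have : 1 ≤ n - k := by omega
      exact_mod_cast this
    have h3 : (k:ℝ) + ((n-k:ℕ):ℝ) = (n:ℝ) := by
      have : k + (n - k) = n := by omega
      exact_mod_cast congrArg (Nat.cast : ℕ → ℝ) this
    set x := (k:ℝ); set y := ((n-k:ℕ):ℝ)
    have hx : 0 < x := by linarith
    have hy : 0 < y := by linarith
    have hn0 : (0:ℝ) < (n:ℝ) := by linarith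
    rw [div_add_div _ _ (by positivity) (by positivity), div_mul_div_comm,
      div_le_div_iff₀ (by positivity) (by positivity)]
    have hkey : (n:ℝ)^2 ≤ 4*(y^2 + x^2) := by nlinarith [sq_nonneg (x - y)]
    nlinarith [sq_nonneg (x*y), mul_pos (mul_pos hx hx) (mul_pos hy hy)]
  calc ∑ k ∈ Icc 1 (n-1), 1/((k:ℝ)^2 * ((n-k:ℕ):ℝ)^2)
      ≤ ∑ k ∈ Icc 1 (n-1), 4/(n:ℝ)^2 * (1/(k:ℝ)^2 + 1/((n-k:ℕ):ℝ)^2) :=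
        Finset.sum_le_sum hterm
    _ = 4/(n:ℝ)^2 * ((∑ k ∈ Icc 1 (n-1), 1/(k:ℝ)^2) + ∑ k ∈ Icc 1 (n-1), 1/((n-k:ℕ):ℝ)^2) := by
        rw [← Finset.sum_add_distrib, Finset.mul_sum]
    _ ≤ 16/(n:ℝ)^2 := by
        have hre : ∑ k ∈ Icc 1 (n-1), 1/((n-k:ℕ):ℝ)^2 = ∑ k ∈ Icc 1 (n-1), 1/(k:ℝ)^2 := by
          refine Finset.sum_nbij' (fun k => n - k) (fun k => n - k) ?_ ?_ ?_ ?_ ?_ <;>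
            intro a ha <;> rw [mem_Icc] at ha
          · rw [mem_Icc]; omega
          · rw [mem_Icc]; omega
          · omega
          · omega
        rw [hre]
        have := stmt10_sum_inv_sq_le (n-1)
        have hn0 : (0:ℝ) < (n:ℝ)^2 := by
          have : (0:ℝ) < (n:ℝ) := by exact_mod_cast (by omega : 0 < n)
          positivity
        rw [div_mul_eq_mul_div, div_le_div_iff₀ hn0 hn0]
        nlinarith

/-- if `S = A_R(z+S) - R·S` then `S` satisfies the quadratic
`(R+R²)S² + (R²z+Rz-1)S + Rz = 0` and has a positive radius of convergence. -/
theorem stmt_10 (R : ℝ) (hR : 1 < R) (S : ℕ → ℝ) (hS : DomSeq S)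
    (heq : ∀ n, S n = ARcoeff R S n - R * S n) :
    PowerSeries.C (R + R ^ 2) * PowerSeries.mk S ^ 2 +
        (PowerSeries.C (R ^ 2) * PowerSeries.X + PowerSeries.C R * PowerSeries.X - 1) *
          PowerSeries.mk S +
        PowerSeries.C R * PowerSeries.X = 0 ∧
      ∃ r : ℝ, 0 < r ∧ Summable fun n => S n * r ^ n := by
  obtain ⟨hS0, hSpos⟩ := hS
  have heqA : ∀ k, (1 + R) * S k = ARcoeff R S k := by
    intro k; have := heq k; linarith
  have quad := stmt10_quad R S hS0 heqA
  refine ⟨quad, ?_⟩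
  have hR0 : 0 < R := by linarith
  set a : ℝ := R + R^2 with ha
  have hapos : 0 < a := by positivity
  set A : ℝ := 1/(32*a) with hA
  set B : ℝ := 32*a*R with hB
  have hApos : 0 < A := by rw [hA]; positivity
  have hBpos : 0 < B := by rw [hB]; positivity
  have hAB : A * B = R := by rw [hA, hB]; field_simp
  have hrec := stmt10_rec R S quad
  have hbound : ∀ n, 1 ≤ n → S n ≤ A * B^n / (n:ℝ)^2 := by
    intro n
    induction n using Nat.strong_induction_on with
    | _ n ih =>
      intro hn
      obtain ⟨m, rfl⟩ : ∃ m, n = m + 1 := ⟨n - 1, by omega⟩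
      have hconv : ∑ i ∈ range (m+2), S i * S (m+1-i)
          = ∑ i ∈ Icc 1 m, S i * S (m+1-i) := by
        symm
        apply Finset.sum_subset
        · intro i hi; rw [mem_Icc] at hi; rw [mem_range]; omega
        · intro i hi hi'
          rw [mem_range] at hi; rw [mem_Icc] at hi'
          rcases (by omega : i = 0 ∨ i = m + 1) with h | h <;> subst h <;>
            simp [hS0]
      have key := hrec m
      rw [hconv] at key
      rcases Nat.eq_zero_or_pos m with hm | hm
      · subst hm
        simp [hS0] at key
        rw [key]
        norm_num
        exact hAB.ge
      · -- m ≥ 1, n = m + 1 ≥ 2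
        have hterm : ∀ i ∈ Icc 1 m, S i * S (m+1-i)
            ≤ A^2 * B^(m+1) * (1/((i:ℝ)^2 * ((m+1-i:ℕ):ℝ)^2)) := by
          intro i hi; rw [mem_Icc] at hi
          have h1 := ih i (by omega) hi.1
          have h2 := ih (m+1-i) (by omega) (by omega)
          have hpows : B^i * B^(m+1-i) = B^(m+1) := by
            rw [← pow_add]; congr 1; omega
          have hi1 : ((i:ℕ):ℝ) ≠ 0 := by
            exact_mod_cast (by omega : (i:ℕ) ≠ 0)
          have hi2 : ((m+1-i:ℕ):ℝ) ≠ 0 := by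
            exact_mod_cast (by omega : (m+1-i:ℕ) ≠ 0)
          calc S i * S (m+1-i)
              ≤ (A*B^i/((i:ℕ):ℝ)^2) * (A*B^(m+1-i)/((m+1-i:ℕ):ℝ)^2) :=
                mul_le_mul h1 h2 (hSpos _) (by positivity)
            _ = A^2 * B^(m+1) * (1/((i:ℝ)^2 * ((m+1-i:ℕ):ℝ)^2)) := by
                rw [← hpows]; field_simp
        have hsum : ∑ i ∈ Icc 1 m, S i * S (m+1-i)
            ≤ A^2 * B^(m+1) * (16/(((m+1:ℕ)):ℝ)^2) := by
          calc ∑ i ∈ Icc 1 m, S i * S (m+1-i)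
              ≤ ∑ i ∈ Icc 1 m, A^2 * B^(m+1) * (1/((i:ℝ)^2 * ((m+1-i:ℕ):ℝ)^2)) :=
                Finset.sum_le_sum hterm
            _ = A^2 * B^(m+1) * ∑ i ∈ Icc 1 m, 1/((i:ℝ)^2 * ((m+1-i:ℕ):ℝ)^2) :=
                (Finset.mul_sum _ _ _).symm
            _ ≤ A^2 * B^(m+1) * (16/(((m+1:ℕ)):ℝ)^2) := by
                have hc := stmt10_conv_sum_bound (m+1) (by omega)
                rw [Nat.add_sub_cancel] at hc
                exact mul_le_mul_of_nonneg_left hc (by positivity)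
        have hSm := ih m (by omega) hm
        have hx1 : (1:ℝ) ≤ (m:ℝ) := by exact_mod_cast hm
        have hBm : (0:ℝ) < B^m := by positivity
        have e1 : a * (A^2 * B^(m+1) * (16/(((m+1:ℕ)):ℝ)^2))
            = (A/2) * B^(m+1)/(((m+1:ℕ)):ℝ)^2 := by
          have hm1 : (((m+1:ℕ)):ℝ) ≠ 0 := by exact_mod_cast (by omega : m+1 ≠ 0)
          rw [hA]
          field_simp
          ring
        have e2 : a * S m ≤ (A/2) * B^(m+1)/(((m+1:ℕ)):ℝ)^2 := by
          have step1 : a * S m ≤ a * (A * B^m/(m:ℝ)^2) :=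
            mul_le_mul_of_nonneg_left hSm hapos.le
          have s1 : ((m:ℝ)+1)^2 ≤ 16*R*(m:ℝ)^2 := by
            nlinarith [sq_nonneg ((m:ℝ)-1)]
          have step2 : a * (A * B^m/(m:ℝ)^2) ≤ (A/2) * B^(m+1)/(((m+1:ℕ)):ℝ)^2 := by
            push_cast
            rw [show a * (A * B^m/(m:ℝ)^2) = (a*A*B^m)/(m:ℝ)^2 by ring,
              div_le_div_iff₀ (by positivity) (by positivity)]
            have hBsucc : B^(m+1) = B^m * (32*a*R) := by rw [pow_succ, hB]
            rw [hBsucc]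
            have hfac : (0:ℝ) ≤ a*A*B^m := by positivity
            calc a*A*B^m * ((m:ℝ)+1)^2 ≤ a*A*B^m * (16*R*(m:ℝ)^2) :=
                  mul_le_mul_of_nonneg_left s1 hfac
              _ = A/2 * (B^m * (32*a*R)) * (m:ℝ)^2 := by ring
          linarith
        have t1 : a * (∑ i ∈ Icc 1 m, S i * S (m+1-i))
            ≤ (A/2) * B^(m+1)/(((m+1:ℕ)):ℝ)^2 := by
          calc a * (∑ i ∈ Icc 1 m, S i * S (m+1-i))
              ≤ a * (A^2 * B^(m+1) * (16/(((m+1:ℕ)):ℝ)^2)) :=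
                mul_le_mul_of_nonneg_left hsum hapos.le
            _ = (A/2) * B^(m+1)/(((m+1:ℕ)):ℝ)^2 := e1
        rw [key, if_neg (by omega)]
        have : (A/2) * B^(m+1)/(((m+1:ℕ)):ℝ)^2 + (A/2) * B^(m+1)/(((m+1:ℕ)):ℝ)^2
            = A * B^(m+1)/(((m+1:ℕ)):ℝ)^2 := by ring
        linarith
  have hbound2 : ∀ n, S n ≤ A * B^n := by
    intro n
    rcases Nat.eq_zero_or_pos n with h | h
    · rw [h, hS0, pow_zero, mul_one]; exact hApos.le
    · have h1 := hbound n h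
      have hn1 : (1:ℝ) ≤ (n:ℝ)^2 := by
        have : (1:ℝ) ≤ (n:ℝ) := by exact_mod_cast h
        nlinarith
      calc S n ≤ A * B^n / (n:ℝ)^2 := h1
        _ ≤ A * B^n := div_le_self (by positivity) hn1
  refine ⟨1/(2*B), by positivity, ?_⟩
  apply Summable.of_nonneg_of_le
    (f := fun n => A * (1/2:ℝ)^n)
    (fun n => mul_nonneg (hSpos n) (by positivity))
  · intro n
    calc S n * (1/(2*B))^n ≤ (A * B^n) * (1/(2*B))^n :=
          mul_le_mul_of_nonneg_right (hbound2 n) (by positivity)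
      _ = A * (1/2:ℝ)^n := by
          rw [mul_assoc, ← mul_pow]
          congr 2
          field_simp
  · exact (summable_geometric_of_lt_one (by norm_num) (by norm_num)).mul_left A
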